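/- Suppose cof(θ) > ω, α is a countable ordinal, and β > α·2. Then the game DG^β_{θ,α} detects membership in 𝒮_θ: for any binary-relation structures M₀ = (M₀,R₀) ∈ 𝒮_θ and M₁ = (M₁,R₁) ∉ 𝒮_θ, Adam has a winning strategy in DG^β_{θ,α}(M₀,M₁). -/

import Mathlib

open Cardinal Set

universe u

namespace DGRel

/- The similarity game `DG^β_{θ,α}` of Väänänen–Veličković, specialised to structures
`(M₀, R₀)`, `(M₁, R₁)` with a single binary relation (this covers in particular linear
orders, with `R = (<)`). -/

variable {M N : Type u} (R0 : M → M → Prop) (R1 : N → N → Prop)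

/-- A partial isomorphism between `(M, R0)` and `(N, R1)`, given as the graph of a
partial map: functional, injective, and preserving the relation in both directions. -/
def IsPartialIso (g : Set (M × N)) : Prop :=
  (∀ ⦃a : M⦄ ⦃b b' : N⦄, (a, b) ∈ g → (a, b') ∈ g → b = b') ∧
  (∀ ⦃a a' : M⦄ ⦃b : N⦄, (a, b) ∈ g → (a', b) ∈ g → a = a') ∧
  (∀ ⦃a a' : M⦄ ⦃b b' : N⦄, (a, b) ∈ g → (a', b') ∈ g → (R0 a a' ↔ R1 b b'))

/-- A `(θ, α)`-position in the similarity game on `(M, N)`:  a clock ordinal `ht`, sets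
`A0 ⊆ M`, `A1 ⊆ N` of cardinality `≤ θ`, a partial isomorphism `g` between them, and
height functions `h0`, `h1` taking values `< α` on `A0`, `A1`, such that every element of
height `0` is matched by `g`. -/
structure Position (R0 : M → M → Prop) (R1 : N → N → Prop)
    (θ : Cardinal.{u}) (α : Ordinal.{u}) : Type (u + 1) where
  ht : Ordinal.{u}
  A0 : Set M
  A1 : Set N
  A0_card : #A0 ≤ θ
  A1_card : #A1 ≤ θ
  g : Set (M × N)
  g_iso : IsPartialIso R0 R1 g
  g_sub : g ⊆ A0 ×ˢ A1
  h0 : M → Ordinal.{u}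
  h1 : N → Ordinal.{u}
  h0_lt : ∀ a ∈ A0, h0 a < α
  h1_lt : ∀ b ∈ A1, h1 b < α
  h0_zero : ∀ a ∈ A0, h0 a = 0 → ∃ b, (a, b) ∈ g
  h1_zero : ∀ b ∈ A1, h1 b = 0 → ∃ a, (a, b) ∈ g

variable {θ : Cardinal.{u}} {α : Ordinal.{u}}

/-- `q` extends `p` (written `q < p` in the paper): the clock strictly decreases, the sets
grow, the partial isomorphism of `q` restricted to the old sets is that of `p`, and every
height strictly decreases unless it is already `0`. -/
def Extends (q p : Position R0 R1 θ α) : Prop :=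
  q.ht < p.ht ∧ p.A0 ⊆ q.A0 ∧ p.A1 ⊆ q.A1 ∧
  p.g ⊆ q.g ∧ (∀ a b, (a, b) ∈ q.g → a ∈ p.A0 → (a, b) ∈ p.g) ∧
  (∀ a ∈ p.A0, q.h0 a ≤ p.h0 a ∧ (p.h0 a ≠ 0 → q.h0 a < p.h0 a)) ∧
  (∀ b ∈ p.A1, q.h1 b ≤ p.h1 b ∧ (p.h1 b ≠ 0 → q.h1 b < p.h1 b))

/-- The starting position `(β, ∅, ∅, ∅, ∅)`. -/
def startPos (β : Ordinal.{u}) : Position R0 R1 θ α where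
  ht := β
  A0 := ∅
  A1 := ∅
  A0_card := by simp
  A1_card := by simp
  g := ∅
  g_iso := by refine ⟨?_, ?_, ?_⟩ <;> intros <;> simp_all
  g_sub := by simp
  h0 := fun _ => 0
  h1 := fun _ => 0
  h0_lt := by simp
  h1_lt := by simp
  h0_zero := by simp
  h1_zero := by simp

/-- Eve has a winning strategy in the similarity game from position `p`:  whatever clock
ordinal `β' < ht p` and sets `B0`, `B1` of size `≤ θ` Adam demands, Eve can move to an
extending position covering them from which she again has a winning strategy.  (Since the
clock strictly decreases, the game is finite, and this well-founded recursion captures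
exactly the existence of a winning strategy for Eve.) -/
noncomputable def EveWinsFrom (p : Position R0 R1 θ α) : Prop :=
  WellFounded.fix (C := fun _ : Ordinal.{u} => Position R0 R1 θ α → Prop) Ordinal.lt_wf
    (fun o IH p =>
      ∀ β' (hβ : β' < o) (B0 : Set M) (B1 : Set N), #B0 ≤ θ → #B1 ≤ θ →
        ∃ q : Position R0 R1 θ α, Extends R0 R1 q p ∧ q.ht = β' ∧
          B0 ⊆ q.A0 ∧ B1 ⊆ q.A1 ∧ IH β' hβ q)
    p.ht p

/-- Eve has a winning strategy in the game `DG^β_{θ,α}((M,R0), (N,R1))`. -/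
noncomputable def EveWinsGame (β : Ordinal.{u}) (θ : Cardinal.{u}) (α : Ordinal.{u}) : Prop :=
  EveWinsFrom R0 R1 (startPos R0 R1 (θ := θ) (α := α) β)

/-- Adam has a winning strategy from position `p`: he can demand a clock ordinal
`β' < ht p` and sets `B0`, `B1` of size `≤ θ` such that every legal reply of Eve leads to
a position from which Adam again has a winning strategy (in particular, if Eve has no
legal reply, she loses). -/
inductive AdamWinsFrom : Position R0 R1 θ α → Prop where
  | step (p : Position R0 R1 θ α) (β' : Ordinal.{u}) (hβ : β' < p.ht)
      (B0 : Set M) (B1 : Set N) (hB0 : #B0 ≤ θ) (hB1 : #B1 ≤ θ)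
      (h : ∀ q : Position R0 R1 θ α, Extends R0 R1 q p → q.ht = β' →
        B0 ⊆ q.A0 → B1 ⊆ q.A1 → AdamWinsFrom q) :
      AdamWinsFrom p

/-- Adam has a winning strategy in the game `DG^β_{θ,α}((M,R0), (N,R1))`. -/
def AdamWinsGame (β : Ordinal.{u}) (θ : Cardinal.{u}) (α : Ordinal.{u}) : Prop :=
  AdamWinsFrom R0 R1 (startPos R0 R1 (θ := θ) (α := α) β)

/-- A position of the infinite game `DG_{θ,α}` (no clock ordinal). -/
structure IPosition (R0 : M → M → Prop) (R1 : N → N → Prop)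
    (θ : Cardinal.{u}) (α : Ordinal.{u}) : Type (u + 1) where
  A0 : Set M
  A1 : Set N
  A0_card : #A0 ≤ θ
  A1_card : #A1 ≤ θ
  g : Set (M × N)
  g_iso : IsPartialIso R0 R1 g
  g_sub : g ⊆ A0 ×ˢ A1
  h0 : M → Ordinal.{u}
  h1 : N → Ordinal.{u}
  h0_lt : ∀ a ∈ A0, h0 a < α
  h1_lt : ∀ b ∈ A1, h1 b < α
  h0_zero : ∀ a ∈ A0, h0 a = 0 → ∃ b, (a, b) ∈ g
  h1_zero : ∀ b ∈ A1, h1 b = 0 → ∃ a, (a, b) ∈ g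

/-- Extension of positions in the infinite game. -/
def IExtends (q p : IPosition R0 R1 θ α) : Prop :=
  p.A0 ⊆ q.A0 ∧ p.A1 ⊆ q.A1 ∧
  p.g ⊆ q.g ∧ (∀ a b, (a, b) ∈ q.g → a ∈ p.A0 → (a, b) ∈ p.g) ∧
  (∀ a ∈ p.A0, q.h0 a ≤ p.h0 a ∧ (p.h0 a ≠ 0 → q.h0 a < p.h0 a)) ∧
  (∀ b ∈ p.A1, q.h1 b ≤ p.h1 b ∧ (p.h1 b ≠ 0 → q.h1 b < p.h1 b))

/-- The empty starting position of the infinite game. -/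
def startIPos : IPosition R0 R1 θ α where
  A0 := ∅
  A1 := ∅
  A0_card := by simp
  A1_card := by simp
  g := ∅
  g_iso := by refine ⟨?_, ?_, ?_⟩ <;> intros <;> simp_all
  g_sub := by simp
  h0 := fun _ => 0
  h1 := fun _ => 0
  h0_lt := by simp
  h1_lt := by simp
  h0_zero := by simp
  h1_zero := by simp

/-- Eve has a winning strategy in the infinite game `DG_{θ,α}` of length `ω`.  Since this
game is closed for Eve, having a winning strategy is equivalent to having a positional
one, i.e. a set `K` of positions containing the starting position such that Eve can
answer any challenge of Adam while staying inside `K`. -/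
def EveWinsInfGame (θ : Cardinal.{u}) (α : Ordinal.{u}) : Prop :=
  ∃ K : Set (IPosition R0 R1 θ α), startIPos R0 R1 ∈ K ∧
    ∀ p ∈ K, ∀ (B0 : Set M) (B1 : Set N), #B0 ≤ θ → #B1 ≤ θ →
      ∃ q ∈ K, IExtends R0 R1 q p ∧ B0 ⊆ q.A0 ∧ B1 ⊆ q.A1

end DGRel

namespace DGRel

variable {M₂ M₃ : Type u} {R₂ : M₂ → M₂ → Prop} {R₃ : M₃ → M₃ → Prop}
variable {θ : Cardinal.{u}} {α : Ordinal.{u}}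

lemma matched_lt (h₀ : ∀ a : M₂, #{b : M₂ | R₂ a b} < θ)
    (q : Position R₂ R₃ θ α) (a₀ : M₂) (a₁ : M₃) (hg : (a₀, a₁) ∈ q.g)
    (S : Set M₃) (hSR : ∀ b ∈ S, R₃ a₁ b) :
    #{b ∈ S | ∃ x, (x, b) ∈ q.g} < θ := by
  refine lt_of_le_of_lt ?_ (h₀ a₀)
  have hch : ∀ b : {b ∈ S | ∃ x, (x, b) ∈ q.g}, ∃ x, (x, (b : M₃)) ∈ q.g := fun b => b.2.2
  choose f hf using hch
  have hR : ∀ b, R₂ a₀ (f b) := fun b => (q.g_iso.2.2 hg (hf b)).mpr (hSR _ b.2.1)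
  refine Cardinal.mk_le_of_injective (f := fun b => (⟨f b, hR b⟩ : {x : M₂ | R₂ a₀ x})) ?_
  intro b b' h
  have hx : f b = f b' := congrArg Subtype.val h
  exact Subtype.ext (q.g_iso.1 (hx ▸ hf b) (hf b'))

lemma exists_level (hcof : Cardinal.aleph0 < θ.ord.cof)
    (h₀ : ∀ a : M₂, #{b : M₂ | R₂ a b} < θ)
    (q : Position R₂ R₃ θ α) (a₀ : M₂) (a₁ : M₃) (hg : (a₀, a₁) ∈ q.g)
    (S : Set M₃) (hS1 : S ⊆ q.A1) (hScard : θ ≤ #S) (hSR : ∀ b ∈ S, R₃ a₁ b)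
    (γb : Ordinal.{u}) (hγb : γb.card ≤ Cardinal.aleph0)
    (hhts : ∀ b ∈ S, q.h1 b < γb) :
    ∃ (δ : Ordinal.{u}) (T : Set M₃), δ ≠ 0 ∧ δ < γb ∧ T ⊆ S ∧ θ ≤ #T ∧
      (∀ b ∈ T, q.h1 b = δ) ∧ ∀ b ∈ T, ¬∃ x, (x, b) ∈ q.g := by
  have hθinf : Cardinal.aleph0 < θ := hcof.trans_le (Ordinal.cof_ord_le θ)
  set Mt : Set M₃ := {b ∈ S | ∃ x, (x, b) ∈ q.g} with hMtdef
  have hMt : #Mt < θ := matched_lt h₀ q a₀ a₁ hg S hSR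
  set U : Set M₃ := S \ Mt with hUdef
  have hMtS : Mt ⊆ S := fun b hb => hb.1
  have hU : θ ≤ #U := by
    by_contra h
    push_neg at h
    have h1 : #S ≤ #Mt + #U := by
      rw [← Set.union_diff_cancel hMtS]
      exact Cardinal.mk_union_le _ _
    exact (hScard.trans_lt (h1.trans_lt (Cardinal.add_lt_of_lt hθinf.le hMt h))).false
  have hUS : U ⊆ S := Set.diff_subset
  have hUnm : ∀ b ∈ U, ¬∃ x, (x, b) ∈ q.g := fun b hb hex => hb.2 ⟨hUS hb, hex⟩
  have hUne : U.Nonempty := by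
    rw [← Set.nonempty_coe_sort, ← Cardinal.mk_ne_zero_iff]
    intro h0
    rw [h0] at hU
    exact absurd (hU.trans_lt' hθinf) (by simp)
  obtain ⟨b₀, hb₀⟩ := hUne
  have hγbne : (0 : Ordinal) < γb := (zero_le (a := q.h1 b₀)).trans_lt (hhts b₀ (hUS hb₀))
  have hcnt : (Set.Iio γb).Countable := by
    rw [← Cardinal.le_aleph0_iff_set_countable, Ordinal.mk_Iio_ordinal]
    exact (Cardinal.lift_le.mpr hγb).trans_eq Cardinal.lift_aleph0
  obtain ⟨f, hfsurj⟩ := hcnt.exists_surjective ⟨0, Set.mem_Iio.mpr hγbne⟩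
  set C : ULift.{u} ℕ → Set M₃ := fun n => {b ∈ U | q.h1 b = (f n.down : Ordinal)} with hCdef
  have hcover : U ⊆ ⋃ n, C n := by
    intro b hb
    obtain ⟨n, hn⟩ := hfsurj ⟨q.h1 b, Set.mem_Iio.mpr (hhts b (hUS hb))⟩
    exact Set.mem_iUnion.mpr ⟨⟨n⟩, hb, (congrArg Subtype.val hn).symm⟩
  have hex : ∃ n, θ ≤ #(C n) := by
    by_contra h
    push_neg at h
    have h1 : #U ≤ #(ULift.{u} ℕ) * ⨆ n, #(C n) :=
      (Cardinal.mk_le_mk_of_subset hcover).trans (Cardinal.mk_iUnion_le C)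
    have hι : #(ULift.{u} ℕ) = Cardinal.aleph0 := by simp
    have hsup : (⨆ n, #(C n)) < θ := Ordinal.iSup_lt (by rw [hι]; exact hcof) h
    have : #U < θ := h1.trans_lt (Cardinal.mul_lt_of_lt hθinf.le (hι ▸ hθinf) hsup)
    exact absurd hU this.not_ge
  obtain ⟨n, hn⟩ := hex
  have hCne : (C n).Nonempty := by
    rw [← Set.nonempty_coe_sort, ← Cardinal.mk_ne_zero_iff]
    intro h0
    rw [h0] at hn
    exact absurd (hn.trans_lt' hθinf) (by simp)
  obtain ⟨c₀, hc₀⟩ := hCne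
  refine ⟨(f n.down : Ordinal), C n, ?_, Set.mem_Iio.mp (f n.down).2, fun b hb => hUS hb.1, hn,
    fun b hb => hb.2, fun b hb => hUnm b hb.1⟩
  intro h0
  have hU1 : (c₀ : M₃) ∈ q.A1 := hS1 (hUS hc₀.1)
  have := q.h1_zero c₀ hU1 (hc₀.2.trans h0)
  exact hUnm c₀ hc₀.1 this

lemma phase2 (hcof : Cardinal.aleph0 < θ.ord.cof)
    (h₀ : ∀ a : M₂, #{b : M₂ | R₂ a b} < θ) :
    ∀ γ : Ordinal.{u}, γ.card ≤ Cardinal.aleph0 → γ ≠ 0 →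
    ∀ p : Position R₂ R₃ θ α, ∀ a₀ a₁, (a₀, a₁) ∈ p.g → γ + 1 ≤ p.ht →
    ∀ T : Set M₃, T ⊆ p.A1 → θ ≤ #T → (∀ b ∈ T, R₃ a₁ b) →
    (∀ b ∈ T, p.h1 b = γ) → (∀ b ∈ T, ¬∃ x, (x, b) ∈ p.g) →
    AdamWinsFrom R₂ R₃ p := by
  intro γ
  induction γ using Ordinal.induction with
  | h γ IH =>
    intro hγcard hγne p a₀ a₁ hg hht T hT1 hTcard hTR hTh hTnm
    have hγlt : γ < p.ht := lt_of_lt_of_le (by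
      rw [Ordinal.add_one_eq_succ]; exact Order.lt_succ γ) hht
    refine AdamWinsFrom.step p γ hγlt ∅ ∅ (by simp) (by simp) ?_
    intro q hExt hhtq _ _
    obtain ⟨-, -, hA1, hgsub, -, -, hh1⟩ := hExt
    have hlt : ∀ b ∈ T, q.h1 b < γ := by
      intro b hb
      have := (hh1 b (hT1 hb)).2 (by rw [hTh b hb]; exact hγne)
      rwa [hTh b hb] at this
    obtain ⟨δ, T', hδne, hδlt, hT'T, hT'card, hT'h, hT'nm⟩ :=
      exists_level hcof h₀ q a₀ a₁ (hgsub hg) T (hT1.trans hA1) hTcard hTR γ hγcard hlt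
    exact IH δ hδlt ((Ordinal.card_le_card hδlt.le).trans hγcard) hδne q a₀ a₁ (hgsub hg)
      (by rw [hhtq, Ordinal.add_one_eq_succ]; exact Order.succ_le_of_lt hδlt)
      T' (fun b hb => hA1 (hT1 (hT'T hb))) hT'card (fun b hb => hTR b (hT'T hb)) hT'h hT'nm

lemma phase1 (hcof : Cardinal.aleph0 < θ.ord.cof) (hα : α.card ≤ Cardinal.aleph0)
    (h₀ : ∀ a : M₂, #{b : M₂ | R₂ a b} < θ) :
    ∀ γ : Ordinal.{u}, ∀ p : Position R₂ R₃ θ α, ∀ a₁ : M₃,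
    θ ≤ #{b : M₃ | R₃ a₁ b} → a₁ ∈ p.A1 → p.h1 a₁ = γ → γ < α → α + γ + 1 ≤ p.ht →
    AdamWinsFrom R₂ R₃ p := by
  intro γ
  induction γ using Ordinal.induction with
  | h γ IH =>
    intro p a₁ hnb ha₁ hh₁ hγα hht
    rcases eq_or_ne γ 0 with hγ0 | hγ0
    · -- a₁ is already matched; demand a θ-sized set of neighbours of a₁
      obtain ⟨a₀, hg⟩ := p.h1_zero a₁ ha₁ (hγ0 ▸ hh₁)
      obtain ⟨S, hSnb, hScard⟩ := Cardinal.le_mk_iff_exists_subset.mp hnb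
      have hαlt : α < p.ht := by
        refine lt_of_lt_of_le ?_ hht
        calc α ≤ α + γ := le_self_add
        _ < α + γ + 1 := by rw [Ordinal.add_one_eq_succ]; exact Order.lt_succ _
      refine AdamWinsFrom.step p α hαlt ∅ S (by simp) hScard.le ?_
      intro q hExt hhtq _ hSq
      have hg' : (a₀, a₁) ∈ q.g := hExt.2.2.2.1 hg
      have hSR : ∀ b ∈ S, R₃ a₁ b := fun b hb => hSnb hb
      obtain ⟨δ, T', hδne, hδlt, hT'S, hT'card, hT'h, hT'nm⟩ :=
        exists_level hcof h₀ q a₀ a₁ hg' S hSq hScard.ge hSR α hα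
          (fun b hb => q.h1_lt b (hSq hb))
      exact phase2 hcof h₀ δ ((Ordinal.card_le_card hδlt.le).trans hα) hδne q a₀ a₁ hg'
        (by rw [hhtq, Ordinal.add_one_eq_succ]; exact Order.succ_le_of_lt hδlt)
        T' (fun b hb => hSq (hT'S hb)) hT'card (fun b hb => hSR b (hT'S hb)) hT'h hT'nm
    · -- drive the height of a₁ down
      have hβ'lt : α + γ < p.ht := lt_of_lt_of_le (by
        rw [Ordinal.add_one_eq_succ]; exact Order.lt_succ _) hht
      refine AdamWinsFrom.step p (α + γ) hβ'lt ∅ ∅ (by simp) (by simp) ?_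
      intro q hExt hhtq _ _
      obtain ⟨-, -, hA1, -, -, -, hh1⟩ := hExt
      have hγ' : q.h1 a₁ < γ := by
        have := (hh1 a₁ ha₁).2 (by rw [hh₁]; exact hγ0)
        rwa [hh₁] at this
      refine IH (q.h1 a₁) hγ' q a₁ hnb (hA1 ha₁) rfl (hγ'.trans hγα) ?_
      rw [hhtq, add_assoc, Ordinal.add_one_eq_succ]
      exact add_le_add_right (Order.succ_le_of_lt hγ') α

end DGRel

open DGRel in
/-- Suppose `cof(θ) > ω`, `α` is a countable ordinal and `β > α·2`.
Then the game `DG^β_{θ,α}` detects membership in `𝒮_θ`: if `(M₀,R₀) ∈ 𝒮_θ` (every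
`R₀`-neighbourhood has size `< θ`) and `(M₁,R₁) ∉ 𝒮_θ`, then Adam has a winning strategy
in `DG^β_{θ,α}((M₀,R₀),(M₁,R₁))`. -/
theorem adam_wins_detects_small_neighbourhoods
    (M₀ M₁ : Type u) (R₀ : M₀ → M₀ → Prop) (R₁ : M₁ → M₁ → Prop)
    (θ : Cardinal.{u}) (α β : Ordinal.{u})
    (hcof : Cardinal.aleph0 < θ.ord.cof)
    (hα : α.card ≤ Cardinal.aleph0)
    (hβ : α * 2 < β)
    (h₀ : ∀ a : M₀, #{b : M₀ | R₀ a b} < θ)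
    (h₁ : ¬ ∀ a : M₁, #{b : M₁ | R₁ a b} < θ) :
    AdamWinsGame R₀ R₁ β θ α := by
  push_neg at h₁
  obtain ⟨a₁, hnb⟩ := h₁
  have hθinf : Cardinal.aleph0 < θ := hcof.trans_le (Ordinal.cof_ord_le θ)
  show AdamWinsFrom R₀ R₁ (startPos R₀ R₁ (θ := θ) (α := α) β)
  have hβ' : α * 2 < (startPos R₀ R₁ (θ := θ) (α := α) β).ht := hβ
  refine AdamWinsFrom.step _ (α * 2) hβ' ∅ {a₁} (by simp) ?_ ?_
  · rw [Cardinal.mk_singleton]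
    exact (Cardinal.one_lt_aleph0.trans hθinf).le
  · intro q hExt hhtq _ hB1
    have ha₁ : a₁ ∈ q.A1 := hB1 rfl
    have hγα : q.h1 a₁ < α := q.h1_lt a₁ ha₁
    refine phase1 hcof hα h₀ (q.h1 a₁) q a₁ hnb ha₁ rfl hγα ?_
    rw [hhtq, add_assoc, Ordinal.add_one_eq_succ,
      show α * 2 = α + α from by rw [show (2 : Ordinal) = 1 + 1 from (one_add_one_eq_two).symm, mul_add, mul_one]]
    exact add_le_add_right (Order.succ_le_of_lt hγα) α
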